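/- Let k be a commutative noetherian ring, A a k-algebra which is flat as a k-module, M a left A-module, (F_i)_{i∈I} a family of rank one free right A-modules, and P a projective A ⊗_k Aᵒᵖ-module. Then the canonical morphism P ⊗_{A ⊗_k Aᵒᵖ} (M ⊗_k ∏_{i∈I} F_i) → ∏_{i∈I} (P ⊗_{A ⊗_k Aᵒᵖ} (M ⊗_k F_i)) is injective. -/

import Mathlib

open TensorProduct MulOpposite CategoryTheory

universe u v w x

set_option maxHeartbeats 1000000
set_option linter.unusedSectionVars false
set_option linter.unusedVariables false

noncomputable section

section BimoduleTensor
variable (k : Type u) (A : Type v) [CommRing k] [Ring A] [Algebra k A]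
variable (M : Type w) [AddCommGroup M] [Module k M] [Module A M] [IsScalarTower k A M]
variable (N : Type w') [AddCommGroup N] [Module k N] [Module Aᵐᵒᵖ N] [IsScalarTower k Aᵐᵒᵖ N]

/-- Right `A`-action on `M ⊗[k] N` through the second factor. -/
def rightEnd : Aᵐᵒᵖ →+* Module.End k (M ⊗[k] N) where
  toFun a := LinearMap.lTensor M ((Algebra.lsmul k k N) a)
  map_one' := by (try dsimp only); rw [map_one]; exact LinearMap.lTensor_id M N
  map_mul' a b := by (try dsimp only); rw [map_mul]; exact LinearMap.lTensor_comp M _ _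
  map_zero' := by (try dsimp only); rw [map_zero]; exact LinearMap.lTensor_zero M
  map_add' a b := by (try dsimp only); rw [map_add]; exact LinearMap.lTensor_add M _ _

/-- `M ⊗[k] N` as a module over `Aᵐᵒᵖ` (through the second factor). -/
def tensorRightModule : Module Aᵐᵒᵖ (M ⊗[k] N) := Module.compHom _ (rightEnd k A M N)

theorem tensorRightModule_smul_tmul (a : Aᵐᵒᵖ) (m : M) (n : N) :
    letI := tensorRightModule k A M N
    a • (m ⊗ₜ[k] n) = m ⊗ₜ[k] (a • n) := rfl

theorem tensorRightModule_isScalarTower :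
    letI := tensorRightModule k A M N
    IsScalarTower k Aᵐᵒᵖ (M ⊗[k] N) := by
  letI := tensorRightModule k A M N
  constructor
  intro c a x
  induction x using TensorProduct.induction_on with
  | zero => simp only [smul_zero]
  | tmul m n =>
      rw [tensorRightModule_smul_tmul, tensorRightModule_smul_tmul, smul_assoc, tmul_smul]
  | add x y hx hy => rw [smul_add, smul_add, smul_add, hx, hy]

theorem tensorRightModule_smulCommClass :
    letI := tensorRightModule k A M N
    SMulCommClass A Aᵐᵒᵖ (M ⊗[k] N) := by
  letI := tensorRightModule k A M N
  constructor
  intro a b x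
  induction x using TensorProduct.induction_on with
  | zero => simp only [smul_zero]
  | tmul m n =>
      rw [tensorRightModule_smul_tmul, smul_tmul', smul_tmul', tensorRightModule_smul_tmul]
  | add x y hx hy => rw [smul_add, smul_add, smul_add, smul_add, hx, hy]

/-- The `k`-central `A`-bimodule structure on `M ⊗[k] N`, as a module over the enveloping
algebra `A ⊗[k] Aᵐᵒᵖ`: here `A` acts on the left factor and `Aᵐᵒᵖ` on the right factor. -/
def bimoduleTensorModule : Module (A ⊗[k] Aᵐᵒᵖ) (M ⊗[k] N) :=
  letI := tensorRightModule k A M N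
  haveI := tensorRightModule_isScalarTower k A M N
  haveI := tensorRightModule_smulCommClass k A M N
  TensorProduct.Algebra.module

theorem bimoduleTensorModule_smul_tmul (a b : A) (m : M) (n : N) :
    letI := bimoduleTensorModule k A M N
    (a ⊗ₜ[k] (op b)) • (m ⊗ₜ[k] n) = (a • m) ⊗ₜ[k] ((op b) • n) := by
  letI := tensorRightModule k A M N
  letI := bimoduleTensorModule k A M N
  show (a • ((op b) • (m ⊗ₜ[k] n))) = (a • m) ⊗ₜ[k] ((op b) • n)
  rw [tensorRightModule_smul_tmul, smul_tmul']
end BimoduleTensor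

section BalTensor
variable (A : Type u) [Ring A]
variable (N : Type v) [AddCommGroup N] [Module Aᵐᵒᵖ N]
variable (M : Type w) [AddCommGroup M] [Module A M]

/-- The relations defining the balanced tensor product `N ⊗_A M` of a right `A`-module `N`
and a left `A`-module `M`. -/
def balRels : Submodule ℤ (N ⊗[ℤ] M) :=
  Submodule.span ℤ
    {x | ∃ (a : A) (n : N) (m : M), x = ((op a) • n) ⊗ₜ[ℤ] m - n ⊗ₜ[ℤ] (a • m)}

/-- The balanced tensor product `N ⊗_A M` of a right `A`-module `N` and a left `A`-module `M`,
defined as the quotient of `N ⊗[ℤ] M` by the submodule of balancing relations. -/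
abbrev BalTensor := (N ⊗[ℤ] M) ⧸ balRels A N M

variable {M}

/-- The functorial map `N ⊗_A M → N ⊗_A M'` induced by an `A`-linear map `M → M'`. -/
def balMap {M' : Type x} [AddCommGroup M'] [Module A M'] (f : M →ₗ[A] M') :
    BalTensor A N M →ₗ[ℤ] BalTensor A N M' :=
  Submodule.mapQ (balRels A N M) (balRels A N M')
    (LinearMap.lTensor N f.toAddMonoidHom.toIntLinearMap)
    (by
      rw [balRels, Submodule.span_le]
      rintro x ⟨a, n, m, rfl⟩
      change (LinearMap.lTensor N f.toAddMonoidHom.toIntLinearMap)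
        (((op a) • n) ⊗ₜ[ℤ] m - n ⊗ₜ[ℤ] (a • m)) ∈ balRels A N M'
      rw [map_sub, LinearMap.lTensor_tmul, LinearMap.lTensor_tmul]
      have hsm : f.toAddMonoidHom.toIntLinearMap (a • m) = a • (f.toAddMonoidHom.toIntLinearMap m) := by
        simp [LinearMap.map_smul]
      rw [hsm]
      exact Submodule.subset_span ⟨a, n, f.toAddMonoidHom.toIntLinearMap m, rfl⟩)

variable {N} (M)

/-- The functorial map `N ⊗_A M → N' ⊗_A M` induced by a map `N → N'` of right `A`-modules. -/
def balMapLeft {N' : Type x} [AddCommGroup N'] [Module Aᵐᵒᵖ N'] (g : N →ₗ[Aᵐᵒᵖ] N') :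
    BalTensor A N M →ₗ[ℤ] BalTensor A N' M :=
  Submodule.mapQ (balRels A N M) (balRels A N' M)
    (LinearMap.rTensor M g.toAddMonoidHom.toIntLinearMap)
    (by
      rw [balRels, Submodule.span_le]
      rintro x ⟨a, n, m, rfl⟩
      change (LinearMap.rTensor M g.toAddMonoidHom.toIntLinearMap)
        (((op a) • n) ⊗ₜ[ℤ] m - n ⊗ₜ[ℤ] (a • m)) ∈ balRels A N' M
      rw [map_sub, LinearMap.rTensor_tmul, LinearMap.rTensor_tmul]
      have hsm : g.toAddMonoidHom.toIntLinearMap ((op a) • n)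
          = (op a) • (g.toAddMonoidHom.toIntLinearMap n) := by
        simp [LinearMap.map_smul]
      rw [hsm]
      exact Submodule.subset_span ⟨a, g.toAddMonoidHom.toIntLinearMap n, m, rfl⟩)

variable (N)

/-- A right `A`-module `N` is *flat* if the functor `N ⊗_A (−)` is exact on left `A`-modules. -/
def RightFlat : Prop :=
  ∀ (M₁ M₂ M₃ : Type u) [AddCommGroup M₁] [Module A M₁] [AddCommGroup M₂] [Module A M₂]
    [AddCommGroup M₃] [Module A M₃] (f : M₁ →ₗ[A] M₂) (g : M₂ →ₗ[A] M₃),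
    Function.Exact f g → Function.Exact (balMap A N f) (balMap A N g)

/-- The canonical comparison map `(∏ᵢ Fᵢ) ⊗_A M → ∏ᵢ (Fᵢ ⊗_A M)` induced by the
projections `∏ᵢ Fᵢ → Fᵢ`. -/
def balPiCompare {I : Type x} (F : I → Type v) [∀ i, AddCommGroup (F i)]
    [∀ i, Module Aᵐᵒᵖ (F i)] :
    BalTensor A (∀ i, F i) M →ₗ[ℤ] ∀ i, BalTensor A (F i) M :=
  LinearMap.pi fun i => balMapLeft A M (LinearMap.proj i : (∀ j, F j) →ₗ[Aᵐᵒᵖ] F i)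

instance BalTensor.instAddCommGroup : AddCommGroup (BalTensor A N M) :=
  Submodule.Quotient.addCommGroup _

instance BalTensor.instModuleInt : Module ℤ (BalTensor A N M) :=
  Submodule.Quotient.module _

end BalTensor

section BimodProj
variable (k : Type u) (A : Type u) [CommRing k] [Ring A] [Algebra k A]
variable (M : Type u) [AddCommGroup M] [Module k M] [Module A M] [IsScalarTower k A M]
variable {I : Type u} (F : I → Type u) [∀ i, AddCommGroup (F i)] [∀ i, Module k (F i)]
  [∀ i, Module Aᵐᵒᵖ (F i)] [∀ i, IsScalarTower k Aᵐᵒᵖ (F i)]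

/-- The map `M ⊗[k] (∏ⱼ Fⱼ) → M ⊗[k] Fᵢ` induced by the `i`-th projection, as a morphism of
modules over the enveloping algebra `A ⊗[k] Aᵐᵒᵖ`. -/
def bimodPiProj (i : I) :
    letI := bimoduleTensorModule k A M (∀ j, F j)
    letI := bimoduleTensorModule k A M (F i)
    (M ⊗[k] (∀ j, F j)) →ₗ[A ⊗[k] Aᵐᵒᵖ] (M ⊗[k] F i) :=
  letI := bimoduleTensorModule k A M (∀ j, F j)
  letI := bimoduleTensorModule k A M (F i)
  { toFun := LinearMap.lTensor M (LinearMap.proj i : (∀ j, F j) →ₗ[k] F i)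
    map_add' := map_add _
    map_smul' := by
      intro e x
      dsimp only [RingHom.id_apply]
      induction e using TensorProduct.induction_on with
      | zero => exact (congrArg _ (zero_smul (A ⊗[k] Aᵐᵒᵖ) x)).trans (((LinearMap.lTensor M (LinearMap.proj i : (∀ j, F j) →ₗ[k] F i)).map_zero).trans (zero_smul (A ⊗[k] Aᵐᵒᵖ)
            (LinearMap.lTensor M (LinearMap.proj i : (∀ j, F j) →ₗ[k] F i) x)).symm)
      | tmul a b =>
          induction b using MulOpposite.rec' with
          | _ b =>
            induction x using TensorProduct.induction_on with
            | zero => simp only [smul_zero, map_zero]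
            | tmul m g => rfl
            | add x y hx hy => rw [smul_add, map_add, hx, hy, map_add, smul_add]
      | add e f he hf => rw [add_smul, map_add, he, hf, add_smul] }
end BimodProj


/-! ### Auxiliary lemmas -/

section PiTensorInjAux

open LinearMap

variable (k : Type u) [CommRing k]
variable {I : Type x} (N : I → Type v) [∀ i, AddCommGroup (N i)] [∀ i, Module k (N i)]

/-- Naturality of the pi comparison map. -/
theorem piRightHom_natural {M₁ : Type u₁} {M₂ : Type u₂} [AddCommGroup M₁] [Module k M₁]
    [AddCommGroup M₂] [Module k M₂] (f : M₁ →ₗ[k] M₂) (y : M₁ ⊗[k] (∀ i, N i)) :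
    piRightHom k k M₂ N (rTensor _ f y) = fun i => rTensor (N i) f (piRightHom k k M₁ N y i) := by
  induction y using TensorProduct.induction_on with
  | zero => funext i; simp
  | tmul m g => rfl
  | add a b ha hb => funext i; simp [map_add, ha, hb]

/-- The scalar equivalence `(Fin n → k) ⊗ Q ≃ (Fin n → Q)`. -/
noncomputable def finScalarLeft (n : ℕ) (Q : Type u₁) [AddCommGroup Q] [Module k Q] :
    ((Fin n → k) ⊗[k] Q) ≃ₗ[k] (Fin n → Q) :=
  (TensorProduct.comm k _ Q) ≪≫ₗ TensorProduct.piScalarRight k k Q (Fin n)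

theorem finScalarLeft_tmul (n : ℕ) (Q : Type u₁) [AddCommGroup Q] [Module k Q]
    (v : Fin n → k) (q : Q) : finScalarLeft k n Q (v ⊗ₜ[k] q) = fun t => v t • q := by
  simp [finScalarLeft]

/-- Pi swap as a linear equivalence. -/
def piSwap (n : ℕ) : (∀ i, Fin n → N i) ≃ₗ[k] (Fin n → ∀ i, N i) :=
  LinearEquiv.ofLinear
    (LinearMap.pi fun t => LinearMap.pi fun i => (proj t : (Fin n → N i) →ₗ[k] N i) ∘ₗ proj i)
    (LinearMap.pi fun i => LinearMap.pi fun t => (proj i : (∀ i, N i) →ₗ[k] N i) ∘ₗ proj t)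
    rfl rfl

/-- The backwards equivalence for the free finite-rank case. -/
noncomputable def finPiBack (n : ℕ) :
    (∀ i, (Fin n → k) ⊗[k] N i) ≃ₗ[k] ((Fin n → k) ⊗[k] (∀ i, N i)) :=
  (LinearEquiv.piCongrRight fun i => finScalarLeft k n (N i)) ≪≫ₗ piSwap k N n ≪≫ₗ
    (finScalarLeft k n (∀ i, N i)).symm

theorem finPiBack_piRightHom (n : ℕ) (x : (Fin n → k) ⊗[k] (∀ i, N i)) :
    finPiBack k N n (piRightHom k k (Fin n → k) N x) = x := by
  induction x using TensorProduct.induction_on with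
  | zero => simp
  | tmul v p =>
      have h1 : piRightHom k k (Fin n → k) N (v ⊗ₜ p) = fun i => v ⊗ₜ[k] p i := rfl
      rw [h1, finPiBack]
      simp only [LinearEquiv.trans_apply]
      have h2 : (LinearEquiv.piCongrRight fun i => finScalarLeft k n (N i))
          (fun i => v ⊗ₜ[k] p i) = fun i => (fun t => v t • p i) := by
        funext i; exact finScalarLeft_tmul k n (N i) v (p i)
      rw [h2]
      have h3 : piSwap k N n (fun i => (fun t => v t • p i)) = fun t => v t • p := by
        funext t; funext i; rfl
      rw [h3]
      apply (finScalarLeft k n (∀ i, N i)).injective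
      rw [LinearEquiv.apply_symm_apply, finScalarLeft_tmul]
  | add a b ha hb => rw [map_add, map_add, ha, hb]

theorem piRightHom_fin_injective (n : ℕ) :
    Function.Injective (piRightHom k k (Fin n → k) N) := by
  intro a b h
  have := congrArg (finPiBack k N n) h
  rwa [finPiBack_piRightHom, finPiBack_piRightHom] at this

theorem piRightHom_fin_surjective (n : ℕ) :
    Function.Surjective (piRightHom k k (Fin n → k) N) := by
  intro z
  refine ⟨finPiBack k N n z, ?_⟩
  apply (finPiBack k N n).injective
  rw [finPiBack_piRightHom]

theorem piRightHom_injective_of_finite [IsNoetherianRing k]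
    (M : Type u₁) [AddCommGroup M] [Module k M] [Module.Finite k M] :
    Function.Injective (piRightHom k k M N) := by
  rw [injective_iff_map_eq_zero]
  intro x hx
  obtain ⟨n, π, hπ⟩ := Module.Finite.exists_fin' k M
  have hK : (ker π).FG := IsNoetherian.noetherian (ker π)
  obtain ⟨m, s, hs⟩ := Submodule.fg_iff_exists_fin_generating_family.mp hK
  set ρ : (Fin m → k) →ₗ[k] (Fin n → k) := Fintype.linearCombination k s with hρ
  have hrange : range ρ = ker π := by rw [hρ, Fintype.range_linearCombination, hs]
  have hexact : Function.Exact ρ π := LinearMap.exact_iff.mpr hrange.symm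
  obtain ⟨y, rfl⟩ := rTensor_surjective (∀ i, N i) hπ x
  have hcomp : ∀ i, rTensor (N i) π (piRightHom k k (Fin n → k) N y i) = 0 := by
    intro i
    have := piRightHom_natural k N π y
    rw [hx] at this
    exact (congrFun this.symm i).trans rfl
  have hmem : ∀ i, ∃ z : (Fin m → k) ⊗[k] N i,
      rTensor (N i) ρ z = piRightHom k k (Fin n → k) N y i := by
    intro i
    exact ((rTensor_exact (N i) hexact hπ) (piRightHom k k (Fin n → k) N y i)).mp (hcomp i)
  choose z hz using hmem
  obtain ⟨w, hw⟩ := piRightHom_fin_surjective k N m z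
  have hyz : piRightHom k k (Fin n → k) N (y - rTensor _ ρ w) = 0 := by
    rw [map_sub, piRightHom_natural k N ρ w]
    funext i
    simp only [Pi.sub_apply, Pi.zero_apply, sub_eq_zero]
    rw [← hz i, ← hw]
  have hy : y = rTensor _ ρ w := by
    have := piRightHom_fin_injective k N n
      (show piRightHom k k (Fin n → k) N (y - rTensor _ ρ w)
        = piRightHom k k (Fin n → k) N 0 by rw [hyz, map_zero])
    rwa [sub_eq_zero] at this
  rw [hy, ← rTensor_comp_apply]
  have hzero : π ∘ₗ ρ = 0 :=
    LinearMap.ext fun w' => hexact.apply_apply_eq_zero w'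
  rw [hzero]
  simp

/-- Over a noetherian ring, the comparison map into the product is injective
when all the factors are flat. -/
theorem piRightHom_injective_of_flat [IsNoetherianRing k] [∀ i, Module.Flat k (N i)]
    (M : Type u₁) [AddCommGroup M] [Module k M] :
    Function.Injective (piRightHom k k M N) := by
  rw [injective_iff_map_eq_zero]
  intro x hx
  obtain ⟨M', hfin, hsub⟩ := TensorProduct.exists_finite_submodule_left_of_setFinite
    {x} (Set.finite_singleton x)
  obtain ⟨x', rfl⟩ := hsub rfl
  have hx' : piRightHom k k M' N x' = 0 := by
    funext i
    have hnat := piRightHom_natural k N M'.subtype x'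
    rw [hx] at hnat
    have h0 : rTensor (N i) M'.subtype (piRightHom k k M' N x' i) = 0 :=
      (congrFun hnat i).symm
    exact Module.Flat.rTensor_preserves_injective_linearMap (M := N i) M'.subtype
      (Submodule.injective_subtype M')
      (show rTensor (N i) M'.subtype _ = rTensor (N i) M'.subtype 0 by rw [h0, map_zero])
  have := piRightHom_injective_of_finite k N M'
    (show piRightHom k k M' N x' = piRightHom k k M' N 0 by rw [hx', map_zero])
  rw [this, map_zero]

theorem piRightHom_eq_lTensor_proj (M : Type u₁) [AddCommGroup M] [Module k M]
    (v : M ⊗[k] (∀ i, N i)) (i : I) :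
    piRightHom k k M N v i = LinearMap.lTensor M (LinearMap.proj i) v := by
  induction v using TensorProduct.induction_on with
  | zero => simp
  | tmul m g => rfl
  | add a b ha hb => simp [map_add, ha, hb]

end PiTensorInjAux

section BalAux

variable (A : Type u) [Ring A]
variable {N : Type v} [AddCommGroup N] [Module Aᵐᵒᵖ N]
variable {M : Type w} [AddCommGroup M] [Module A M]

theorem balMap_mk {M' : Type x} [AddCommGroup M'] [Module A M'] (f : M →ₗ[A] M')
    (n : N) (m : M) :
    balMap A N f (Submodule.Quotient.mk (n ⊗ₜ[ℤ] m)) =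
      Submodule.Quotient.mk (n ⊗ₜ[ℤ] f m) := by
  rw [balMap]; erw [Submodule.mapQ_apply, LinearMap.lTensor_tmul]
  rfl

theorem balMapLeft_mk {N' : Type x} [AddCommGroup N'] [Module Aᵐᵒᵖ N'] (g : N →ₗ[Aᵐᵒᵖ] N')
    (n : N) (m : M) :
    balMapLeft A M g (Submodule.Quotient.mk (n ⊗ₜ[ℤ] m)) =
      Submodule.Quotient.mk ((g n) ⊗ₜ[ℤ] m) := by
  rw [balMapLeft]; erw [Submodule.mapQ_apply, LinearMap.rTensor_tmul]
  rfl

theorem balMap_balMapLeft_comm {M' : Type x} [AddCommGroup M'] [Module A M']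
    {N' : Type x'} [AddCommGroup N'] [Module Aᵐᵒᵖ N'] (f : M →ₗ[A] M') (g : N →ₗ[Aᵐᵒᵖ] N')
    (x : BalTensor A N M) :
    balMap A N' f (balMapLeft A M g x) = balMapLeft A M' g (balMap A N f x) := by
  obtain ⟨y, rfl⟩ := Submodule.Quotient.mk_surjective _ x
  induction y using TensorProduct.induction_on with
  | zero => rw [Submodule.Quotient.mk_zero]; simp
  | tmul n m => rw [balMapLeft_mk, balMap_mk, balMap_mk, balMapLeft_mk]
  | add a b ha hb => simp only [Submodule.Quotient.mk_add, map_add, ha, hb]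

theorem balMapLeft_id (x : BalTensor A N M) :
    balMapLeft A M (LinearMap.id : N →ₗ[Aᵐᵒᵖ] N) x = x := by
  obtain ⟨y, rfl⟩ := Submodule.Quotient.mk_surjective _ x
  induction y using TensorProduct.induction_on with
  | zero => rw [Submodule.Quotient.mk_zero]; simp
  | tmul n m => rw [balMapLeft_mk]; rfl
  | add a b ha hb => rw [Submodule.Quotient.mk_add, map_add, ha, hb]

theorem balMapLeft_comp {N' : Type x} [AddCommGroup N'] [Module Aᵐᵒᵖ N']
    {N'' : Type x'} [AddCommGroup N''] [Module Aᵐᵒᵖ N'']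
    (g₁ : N →ₗ[Aᵐᵒᵖ] N') (g₂ : N' →ₗ[Aᵐᵒᵖ] N'') (x : BalTensor A N M) :
    balMapLeft A M g₂ (balMapLeft A M g₁ x) = balMapLeft A M (g₂ ∘ₗ g₁) x := by
  obtain ⟨y, rfl⟩ := Submodule.Quotient.mk_surjective _ x
  induction y using TensorProduct.induction_on with
  | zero => rw [Submodule.Quotient.mk_zero]; simp
  | tmul n m => rw [balMapLeft_mk, balMapLeft_mk, balMapLeft_mk]; rfl
  | add a b ha hb => rw [Submodule.Quotient.mk_add, map_add, map_add, map_add, ha, hb]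

end BalAux

section BalFree

variable (A : Type u) [Ring A] (J : Type v)
variable {M : Type w} [AddCommGroup M] [Module A M]

/-- Scalar multiplication by `a : A` as a `ℤ`-linear map. -/
def zsmulLinear (a : A) : M →ₗ[ℤ] M := (DistribSMul.toAddMonoidHom M a).toIntLinearMap

@[simp] theorem zsmulLinear_apply (a : A) (m : M) : zsmulLinear A a m = a • m := rfl

/-- The `j`-indexed component of the untensoring map. -/
def balSingleHom (j : J) : Aᵐᵒᵖ →ₗ[ℤ] M →ₗ[ℤ] (J →₀ M) :=
  LinearMap.mk₂ ℤ (fun r m => Finsupp.single j (r.unop • m))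
    (fun r r' m => by
      show Finsupp.single j ((r + r').unop • m)
        = Finsupp.single j (r.unop • m) + Finsupp.single j (r'.unop • m)
      rw [MulOpposite.unop_add, add_smul, Finsupp.single_add])
    (fun z r m => by
      show Finsupp.single j ((z • r).unop • m) = z • Finsupp.single j (r.unop • m)
      rw [MulOpposite.unop_smul, smul_assoc, Finsupp.smul_single])
    (fun r m m' => by
      show Finsupp.single j (r.unop • (m + m'))
        = Finsupp.single j (r.unop • m) + Finsupp.single j (r.unop • m')
      rw [smul_add, Finsupp.single_add])
    (fun z r m => by
      show Finsupp.single j (r.unop • (z • m)) = z • Finsupp.single j (r.unop • m)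
      rw [show r.unop • (z • m) = z • (r.unop • m) from (zsmulLinear A r.unop).map_smul z m,
        Finsupp.smul_single])

/-- The untensoring map `(J →₀ Aᵐᵒᵖ) ⊗[ℤ] M →ₗ[ℤ] (J →₀ M)`. -/
def balT : (J →₀ Aᵐᵒᵖ) ⊗[ℤ] M →ₗ[ℤ] (J →₀ M) :=
  TensorProduct.lift (Finsupp.lsum ℤ (balSingleHom A J))

theorem balT_single_tmul (j : J) (r : Aᵐᵒᵖ) (m : M) :
    balT A J (Finsupp.single j r ⊗ₜ[ℤ] m) = Finsupp.single j (r.unop • m) := by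
  rw [balT]; erw [TensorProduct.lift.tmul, Finsupp.lsum_single]
  rfl

theorem balT_rel (a : A) (f : J →₀ Aᵐᵒᵖ) (m : M) :
    balT A J (((op a) • f) ⊗ₜ[ℤ] m) = balT A J (f ⊗ₜ[ℤ] (a • m)) := by
  induction f using Finsupp.induction_linear with
  | zero => rw [smul_zero, TensorProduct.zero_tmul, TensorProduct.zero_tmul]
  | add f g hf hg =>
      rw [smul_add, TensorProduct.add_tmul, map_add, hf, hg, TensorProduct.add_tmul, map_add]
  | single j r =>
      rw [Finsupp.smul_single, balT_single_tmul, balT_single_tmul, smul_eq_mul,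
        MulOpposite.unop_mul, MulOpposite.unop_op, mul_smul]

/-- The untensoring map descends to the balanced tensor product. -/
def balTQ : BalTensor A (J →₀ Aᵐᵒᵖ) M →ₗ[ℤ] (J →₀ M) :=
  Submodule.liftQ _ (balT A J) (by
    rw [balRels, Submodule.span_le]
    rintro z ⟨a, f, m, rfl⟩
    simp only [SetLike.mem_coe, LinearMap.mem_ker, map_sub, sub_eq_zero]
    exact balT_rel A J a f m)

theorem balTQ_mk (y : (J →₀ Aᵐᵒᵖ) ⊗[ℤ] M) :
    balTQ A J (Submodule.Quotient.mk y) = balT A J y := rfl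

/-- The inverse map `(J →₀ M) → BalTensor A (J →₀ Aᵐᵒᵖ) M`. -/
def balPsi : (J →₀ M) →ₗ[ℤ] BalTensor A (J →₀ Aᵐᵒᵖ) M :=
  Finsupp.lsum ℤ fun j => (Submodule.mkQ _) ∘ₗ
    ((TensorProduct.mk ℤ (J →₀ Aᵐᵒᵖ) M) (Finsupp.single j 1))

theorem balPsi_single (j : J) (m : M) :
    balPsi A J (Finsupp.single j m) =
      Submodule.Quotient.mk (Finsupp.single j (1 : Aᵐᵒᵖ) ⊗ₜ[ℤ] m) := by
  rw [balPsi, Finsupp.lsum_single]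
  rfl

theorem balPsi_balTQ (x : BalTensor A (J →₀ Aᵐᵒᵖ) M) :
    balPsi A J (balTQ A J x) = x := by
  obtain ⟨y, rfl⟩ := Submodule.Quotient.mk_surjective _ x
  rw [balTQ_mk]
  induction y using TensorProduct.induction_on with
  | zero => rw [Submodule.Quotient.mk_zero, map_zero, map_zero]
  | tmul f m =>
      induction f using Finsupp.induction_linear with
      | zero => rw [TensorProduct.zero_tmul, Submodule.Quotient.mk_zero, map_zero, map_zero]
      | add f g hf hg =>
          simp only [TensorProduct.add_tmul, Submodule.Quotient.mk_add, map_add, hf, hg]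
      | single j r =>
          rw [balT_single_tmul, balPsi_single]
          refine Eq.symm ?_
          rw [Submodule.Quotient.eq]
          refine Submodule.subset_span ⟨r.unop, Finsupp.single j 1, m, ?_⟩
          rw [Finsupp.smul_single, smul_eq_mul, MulOpposite.op_unop, mul_one]
  | add a b ha hb => rw [Submodule.Quotient.mk_add, map_add, map_add, ha, hb]

theorem balTQ_natural {M' : Type x} [AddCommGroup M'] [Module A M'] (f : M →ₗ[A] M')
    (x : BalTensor A (J →₀ Aᵐᵒᵖ) M) :
    balTQ A J (balMap A (J →₀ Aᵐᵒᵖ) f x) =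
      Finsupp.mapRange (⇑f) (map_zero f) (balTQ A J x) := by
  obtain ⟨y, rfl⟩ := Submodule.Quotient.mk_surjective _ x
  induction y using TensorProduct.induction_on with
  | zero => rw [Submodule.Quotient.mk_zero, map_zero, map_zero, map_zero, Finsupp.mapRange_zero]
  | tmul g m =>
      induction g using Finsupp.induction_linear with
      | zero =>
          rw [TensorProduct.zero_tmul, Submodule.Quotient.mk_zero, map_zero, map_zero, map_zero,
            Finsupp.mapRange_zero]
      | add g₁ g₂ hg₁ hg₂ =>
          rw [TensorProduct.add_tmul, Submodule.Quotient.mk_add, map_add, map_add, hg₁, hg₂,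
            map_add, Finsupp.mapRange_add (map_add f)]
      | single j r =>
          rw [balMap_mk, balTQ_mk, balTQ_mk, balT_single_tmul, balT_single_tmul,
            Finsupp.mapRange_single, LinearMap.map_smul]
  | add a b ha hb =>
      rw [Submodule.Quotient.mk_add, map_add, map_add, ha, hb, map_add,
        Finsupp.mapRange_add (map_add f)]

end BalFree


/-- Let `k` be a commutative noetherian ring and `A` a `k`-algebra which is flat over `k`.
For a left `A`-module `M`, a family `(Fᵢ)` of rank one free right `A`-modules and a projective
`A ⊗[k] Aᵐᵒᵖ`-module `D` (regarded as a right module over the enveloping algebra), the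
canonical morphism
`D ⊗_{A ⊗[k] Aᵐᵒᵖ} (M ⊗[k] ∏ᵢ Fᵢ) → ∏ᵢ (D ⊗_{A ⊗[k] Aᵐᵒᵖ} (M ⊗[k] Fᵢ))`
induced by the projections `∏ᵢ Fᵢ → Fᵢ` is injective. -/
theorem projective_tensor_pi_injective (k A : Type u) [CommRing k] [IsNoetherianRing k]
    [Ring A] [Algebra k A] [Module.Flat k A]
    (M : Type u) [AddCommGroup M] [Module k M] [Module A M] [IsScalarTower k A M]
    (I : Type u) (F : I → Type u) [∀ i, AddCommGroup (F i)] [∀ i, Module k (F i)]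
    [∀ i, Module Aᵐᵒᵖ (F i)] [∀ i, IsScalarTower k Aᵐᵒᵖ (F i)]
    (hF : ∀ i, Nonempty (F i ≃ₗ[Aᵐᵒᵖ] A))
    (D : Type u) [AddCommGroup D] [Module (A ⊗[k] Aᵐᵒᵖ)ᵐᵒᵖ D]
    [Module.Projective (A ⊗[k] Aᵐᵒᵖ)ᵐᵒᵖ D] :
    letI := bimoduleTensorModule k A M (∀ j, F j)
    letI := fun i => bimoduleTensorModule k A M (F i)
    Function.Injective
      (LinearMap.pi fun i =>
        balMap (A ⊗[k] Aᵐᵒᵖ) D (bimodPiProj k A M F i) :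
        BalTensor (A ⊗[k] Aᵐᵒᵖ) D (M ⊗[k] (∀ j, F j)) →ₗ[ℤ]
          ∀ i, BalTensor (A ⊗[k] Aᵐᵒᵖ) D (M ⊗[k] F i)) := by
  letI := bimoduleTensorModule k A M (∀ j, F j)
  letI := fun i => bimoduleTensorModule k A M (F i)
  -- notation
  haveI hT : IsScalarTower k Aᵐᵒᵖ A := ⟨fun c a x => by
    rw [MulOpposite.smul_eq_mul_unop, MulOpposite.smul_eq_mul_unop, MulOpposite.unop_smul,
      mul_smul_comm]⟩
  haveI hFl : ∀ i, Module.Flat k (F i) := by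
    intro i
    obtain ⟨e⟩ := hF i
    have he : ∀ (c : k) (x : F i), e (c • x) = c • e x := fun c x => by
      rw [← smul_one_smul Aᵐᵒᵖ c x, LinearEquiv.map_smul, smul_one_smul]
    exact Module.Flat.of_linearEquiv (e.toAddEquiv.toLinearEquiv he)
  rw [injective_iff_map_eq_zero]
  intro x hx
  have hxi : ∀ i, balMap (A ⊗[k] Aᵐᵒᵖ) D (bimodPiProj k A M F i) x = 0 := fun i =>
    congrFun hx i
  -- use projectivity to embed D into a free module
  obtain ⟨s, hs⟩ := (inferInstance : Module.Projective (A ⊗[k] Aᵐᵒᵖ)ᵐᵒᵖ D).out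
  set x' : BalTensor (A ⊗[k] Aᵐᵒᵖ) (D →₀ (A ⊗[k] Aᵐᵒᵖ)ᵐᵒᵖ) (M ⊗[k] (∀ j, F j)) :=
    balMapLeft (A ⊗[k] Aᵐᵒᵖ) (M ⊗[k] (∀ j, F j)) s x with hx'def
  have hθ' : ∀ i, balMap (A ⊗[k] Aᵐᵒᵖ) (D →₀ (A ⊗[k] Aᵐᵒᵖ)ᵐᵒᵖ) (bimodPiProj k A M F i) x' = 0 := by
    intro i
    rw [hx'def, balMap_balMapLeft_comm, hxi i, map_zero]
  -- untensor the free balanced tensor product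
  have hu : ∀ i d, (bimodPiProj k A M F i) (balTQ (A ⊗[k] Aᵐᵒᵖ) D x' d) = 0 := by
    intro i d
    have hnat := balTQ_natural (A ⊗[k] Aᵐᵒᵖ) D (bimodPiProj k A M F i) x'
    rw [hθ' i, map_zero] at hnat
    have := congrFun (congrArg (⇑) hnat.symm) d
    rwa [Finsupp.mapRange_apply, Finsupp.coe_zero, Pi.zero_apply] at this
  -- components of u vanish
  have hzero : ∀ d, balTQ (A ⊗[k] Aᵐᵒᵖ) D x' d = 0 := by
    intro d
    apply (injective_iff_map_eq_zero _).mp (piRightHom_injective_of_flat k F M)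
    funext i
    rw [Pi.zero_apply, piRightHom_eq_lTensor_proj]
    have hdef : (bimodPiProj k A M F i) (balTQ (A ⊗[k] Aᵐᵒᵖ) D x' d)
        = LinearMap.lTensor M (LinearMap.proj i) (balTQ (A ⊗[k] Aᵐᵒᵖ) D x' d) := rfl
    rw [← hdef]
    exact hu i d
  have hU : balTQ (A ⊗[k] Aᵐᵒᵖ) D x' = 0 := by
    ext d
    exact hzero d
  have hx'0 : x' = 0 := by
    rw [← balPsi_balTQ (A ⊗[k] Aᵐᵒᵖ) D x', hU, map_zero]
  have hback : balMapLeft (A ⊗[k] Aᵐᵒᵖ) (M ⊗[k] (∀ j, F j))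
      (Finsupp.linearCombination ((A ⊗[k] Aᵐᵒᵖ)ᵐᵒᵖ) (id : D → D)) x' = 0 := by
    rw [hx'0, map_zero]
  rw [hx'def, balMapLeft_comp] at hback
  have hgs : (Finsupp.linearCombination ((A ⊗[k] Aᵐᵒᵖ)ᵐᵒᵖ) (id : D → D)) ∘ₗ s = LinearMap.id :=
    LinearMap.ext hs
  rw [hgs] at hback
  rw [← balMapLeft_id (A ⊗[k] Aᵐᵒᵖ) x]
  exact hback


end
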